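/- Under the hypotheses of the main interlacing theorem (f·g_n = D·p_n + (x−A)·q_{n+1}, f > 0 on (c,d), zeros of p_n and q_{n+1} interlacing, g_n monic of degree n with real zeros, g_n and p_n coprime), if A < x_{1,n} (A is less than the smallest zero of p_n), then the zeros y_1 < ... < y_n of g_n satisfy A < x_1 < y_1 < x_2 < y_2 < ... < y_{n-1} < x_n < y_n, where x_1 < ... < x_n are the zeros of p_n. -/
import Mathlib

open Polynomial Finset

lemma sign_prod_even {ι : Type*} [DecidableEq ι] (s : Finset ι) (v : ι → ℝ)
    (h : ∀ i ∈ s, v i ≠ 0) :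
    (0 < ∏ i ∈ s, v i ↔ Even (s.filter (fun i => v i < 0)).card) := by
  classical
  induction s using Finset.induction_on with
  | empty => simp
  | @insert a s ha ih =>
    have h' : ∀ i ∈ s, v i ≠ 0 := fun i hi => h i (Finset.mem_insert_of_mem hi)
    have hP : (∏ i ∈ s, v i) ≠ 0 := Finset.prod_ne_zero_iff.mpr h'
    have hva : v a ≠ 0 := h a (Finset.mem_insert_self a s)
    rw [Finset.prod_insert ha, Finset.filter_insert]
    rcases lt_or_gt_of_ne hva with hneg | hpos
    · rw [if_pos hneg,
        Finset.card_insert_of_notMem (fun hm => ha (Finset.mem_of_mem_filter a hm)),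
        Nat.even_add_one, ← ih h']
      constructor
      · intro h1 h2
        nlinarith
      · intro h1
        have h2 : (∏ i ∈ s, v i) < 0 := lt_of_le_of_ne (not_lt.mp h1) hP
        nlinarith
    · rw [if_neg (by linarith), ← ih h']
      constructor
      · intro h1
        rcases hP.lt_or_gt with h2 | h2
        · nlinarith
        · exact h2
      · intro h1
        exact mul_pos hpos h1

theorem stmt3 (n : ℕ) (p q g D : Polynomial ℝ) (f : ℝ → ℝ) (c d A : ℝ)
    (x : Fin n → ℝ) (z : Fin (n + 1) → ℝ) (y : Fin n → ℝ)
    (hx : StrictMono x) (hz : StrictMono z) (hy : Monotone y)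
    (hp : p = ∏ i, (X - C (x i)))
    (hq : q = ∏ i, (X - C (z i)))
    (hg : g = ∏ i, (X - C (y i)))
    (hxcd : ∀ i, x i ∈ Set.Ioo c d) (hzcd : ∀ i, z i ∈ Set.Ioo c d)
    (hycd : ∀ i, y i ∈ Set.Ioo c d) (hAcd : A ∈ Set.Ioo c d)
    (hint : ∀ i : Fin n, z i.castSucc < x i ∧ x i < z i.succ)
    (hf : ∀ t ∈ Set.Ioo c d, 0 < f t)
    (hid : ∀ t : ℝ, f t * g.eval t = D.eval t * p.eval t + (t - A) * q.eval t)
    (hpA : p.eval A ≠ 0) (hgA : g.eval A ≠ 0)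
    (hAx : ∀ i : Fin n, A < x i) :
    (∀ i : Fin n, x i < y i) ∧
      ∀ i : Fin n, ∀ h : (i : ℕ) + 1 < n, y i < x ⟨(i : ℕ) + 1, h⟩ := by
  classical
  set T : Fin n → Finset (Fin n) := fun i => univ.filter (fun j => x i < y j) with hT
  -- interlacing in terms of values
  have hxz : ∀ (i : Fin n) (j : Fin (n+1)), (x i < z j ↔ (i : ℕ) < (j : ℕ)) := by
    intro i j
    constructor
    · intro hlt
      by_contra hle
      push_neg at hle
      have hj : j ≤ i.castSucc := by
        rw [Fin.le_def]; simpa using hle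
      have : z j ≤ z i.castSucc := hz.monotone hj
      have := (hint i).1
      linarith
    · intro hlt
      have hj : i.succ ≤ j := by
        rw [Fin.le_def]; simpa using hlt
      have : z i.succ ≤ z j := hz.monotone hj
      have := (hint i).2
      linarith
  have hxzne : ∀ (i : Fin n) (j : Fin (n+1)), x i ≠ z j := by
    intro i j
    rcases lt_or_ge (i : ℕ) (j : ℕ) with h1 | h1
    · exact ne_of_lt ((hxz i j).mpr h1)
    · have hj : j ≤ i.castSucc := by rw [Fin.le_def]; simpa using h1
      have h2 : z j ≤ z i.castSucc := hz.monotone hj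
      have := (hint i).1
      exact fun he => by linarith
  -- the key identity at the zeros of p
  have hfg : ∀ i : Fin n, f (x i) * g.eval (x i) = (x i - A) * q.eval (x i) := by
    intro i
    have hp0 : p.eval (x i) = 0 := by
      rw [hp, eval_prod]
      exact Finset.prod_eq_zero (mem_univ i) (by simp)
    have := hid (x i)
    rw [hp0] at this
    linarith
  have hq_ne : ∀ i : Fin n, q.eval (x i) ≠ 0 := by
    intro i
    rw [hq, eval_prod]
    refine Finset.prod_ne_zero_iff.mpr fun j _ => ?_
    simpa [sub_ne_zero] using hxzne i j
  -- sign of q at x i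
  have hqpos : ∀ i : Fin n, (0 < q.eval (x i) ↔ Even (n - (i : ℕ))) := by
    intro i
    rw [hq, eval_prod]
    simp only [eval_sub, eval_X, eval_C]
    rw [sign_prod_even _ _ (fun j _ => sub_ne_zero.mpr (hxzne i j))]
    have hset : (univ.filter (fun j : Fin (n+1) => x i - z j < 0)) = Finset.Ioi i.castSucc := by
      ext j
      simp [Finset.mem_Ioi, sub_neg, hxz i j, Fin.lt_def]
    rw [hset, Fin.card_Ioi]
    simp
  -- g does not vanish at x i, and has the same sign as q there
  have hg_ne : ∀ i : Fin n, g.eval (x i) ≠ 0 := by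
    intro i h0
    have key := hfg i
    rw [h0, mul_zero] at key
    have hxA : x i - A ≠ 0 := sub_ne_zero.mpr (ne_of_gt (hAx i))
    rcases mul_eq_zero.mp key.symm with h | h
    · exact hxA h
    · exact hq_ne i h
  have hgq : ∀ i : Fin n, (0 < g.eval (x i) ↔ 0 < q.eval (x i)) := by
    intro i
    have hfpos : 0 < f (x i) := hf _ (hxcd i)
    have hxA : 0 < x i - A := sub_pos.mpr (hAx i)
    have key := hfg i
    constructor
    · intro h1
      have h2 : 0 < (x i - A) * q.eval (x i) := key ▸ mul_pos hfpos h1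
      rcases (hq_ne i).lt_or_gt with h3 | h3
      · nlinarith
      · exact h3
    · intro h1
      have h2 : 0 < f (x i) * g.eval (x i) := by rw [key]; exact mul_pos hxA h1
      rcases (hg_ne i).lt_or_gt with h3 | h3
      · nlinarith
      · exact h3
  -- y j never equals x i
  have hyne : ∀ (i j : Fin n), y j ≠ x i := by
    intro i j he
    apply hg_ne i
    rw [hg, eval_prod]
    exact Finset.prod_eq_zero (mem_univ j) (by simp [he])
  -- parity of card of T i
  have hSpar : ∀ i : Fin n, (Even (T i).card ↔ Even (n - (i : ℕ))) := by
    intro i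
    have h1 : (0 < g.eval (x i) ↔ Even (T i).card) := by
      rw [hg, eval_prod]
      simp only [eval_sub, eval_X, eval_C]
      rw [sign_prod_even _ _ (fun j _ => sub_ne_zero.mpr (Ne.symm (hyne i j)))]
      have hset : (univ.filter (fun j : Fin n => x i - y j < 0)) = T i := by
        ext j; simp [hT, sub_neg]
      rw [hset]
    rw [← h1, hgq i, hqpos i]
  -- monotonicity
  have hTsub : ∀ i i' : Fin n, i ≤ i' → T i' ⊆ T i := by
    intro i i' hle j hj
    simp only [hT, mem_filter, mem_univ, true_and] at hj ⊢
    exact lt_of_le_of_lt (hx.monotone hle) hj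
  have hSlt : ∀ i i' : Fin n, (i : ℕ) + 1 = (i' : ℕ) → (T i').card < (T i).card := by
    intro i i' hii
    have hle : (T i').card ≤ (T i).card :=
      Finset.card_le_card (hTsub i i' (by rw [Fin.le_def]; omega))
    rcases lt_or_eq_of_le hle with h | h
    · exact h
    · exfalso
      have p1 := hSpar i
      have p2 := hSpar i'
      rw [← h] at p1
      have hn : n - (i : ℕ) = (n - (i' : ℕ)) + 1 := by
        have := i'.isLt; omega
      rw [hn, Nat.even_add_one] at p1
      tauto
  -- upper bound
  have hub : ∀ k, ∀ i : Fin n, (i : ℕ) = k → (T i).card ≤ n - k := by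
    intro k
    induction k with
    | zero =>
      intro i _
      simpa using le_trans (Finset.card_le_univ (T i)) (by simp)
    | succ m ih =>
      intro i hik
      have hm : m < n := by have := i.isLt; omega
      have h1 := ih ⟨m, hm⟩ rfl
      have h2 := hSlt ⟨m, hm⟩ i (by simp [hik])
      omega
  -- lower bound
  have hlb : ∀ k, ∀ i : Fin n, n = (i : ℕ) + k + 1 → n - (i : ℕ) ≤ (T i).card := by
    intro k
    induction k with
    | zero =>
      intro i hik
      have hp1 := hSpar i
      have h1 : n - (i : ℕ) = 1 := by omega
      rw [h1] at hp1 ⊢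
      rcases Nat.eq_zero_or_pos (T i).card with hc | hc
      · exact absurd (hp1.mp (hc ▸ Even.zero)) (by decide)
      · exact hc
    | succ m ih =>
      intro i hik
      have hm : (i : ℕ) + 1 < n := by omega
      have h1 := ih ⟨(i : ℕ) + 1, hm⟩ (by simp; omega)
      have h2 := hSlt i ⟨(i : ℕ) + 1, hm⟩ rfl
      simp at h1
      omega
  have hbound : ∀ i : Fin n, n - (i : ℕ) ≤ (T i).card ∧ (T i).card ≤ n - (i : ℕ) := by
    intro i
    have := i.isLt
    exact ⟨hlb (n - (i : ℕ) - 1) i (by omega), hub (i : ℕ) i rfl⟩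
  constructor
  · intro i
    by_contra hcon
    push_neg at hcon
    have hyi : y i < x i := lt_of_le_of_ne hcon (hyne i i)
    have hsub : T i ⊆ Finset.Ioi i := by
      intro j hj
      simp only [hT, mem_filter, mem_univ, true_and] at hj
      rw [Finset.mem_Ioi]
      by_contra hji
      push_neg at hji
      have : y j ≤ y i := hy hji
      linarith
    have h1 := Finset.card_le_card hsub
    rw [Fin.card_Ioi] at h1
    have h2 := (hbound i).1
    have := i.isLt
    omega
  · intro i h
    set i' : Fin n := ⟨(i : ℕ) + 1, h⟩ with hi'
    by_contra hcon
    push_neg at hcon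
    have hyi : x i' < y i := lt_of_le_of_ne hcon (Ne.symm (hyne i' i))
    have hsub : Finset.Ici i ⊆ T i' := by
      intro j hj
      rw [Finset.mem_Ici] at hj
      simp only [hT, mem_filter, mem_univ, true_and]
      exact lt_of_lt_of_le hyi (hy hj)
    have h1 := Finset.card_le_card hsub
    rw [Fin.card_Ici] at h1
    have h2 := (hbound i').2
    have hv : (i' : ℕ) = (i : ℕ) + 1 := rfl
    omega
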